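/- Let K be a field of characteristic p > 2. The bilinear form α on O₁ = K[x]/(x^p) given by α(x^i,x^j) = i if i+j = p and 0 otherwise is nonzero, and hence HC¹(O₁)^{Der(O₁)}, the space of Der(O₁)-invariant cyclic 1-cocycles on O₁, is exactly one-dimensional, equal to all of HC¹(O₁). -/

import Mathlib

open Polynomial
set_option maxHeartbeats 2000000

theorem stmt_18 (K : Type*) [Field K] (p : ℕ) (hp : p.Prime) (hp2 : 2 < p)
    [CharP K p]
    (α : AdjoinRoot (Polynomial.X ^ p : Polynomial K) →ₗ[K]
         AdjoinRoot (Polynomial.X ^ p : Polynomial K) →ₗ[K] K)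
    (hα : ∀ i j : ℕ, i < p → j < p →
      α (AdjoinRoot.root (Polynomial.X ^ p : Polynomial K) ^ i)
        (AdjoinRoot.root (Polynomial.X ^ p : Polynomial K) ^ j)
        = if i + j = p then (i : K) else 0) :
    α ≠ 0 ∧
    ∀ φ : AdjoinRoot (Polynomial.X ^ p : Polynomial K) →ₗ[K]
          AdjoinRoot (Polynomial.X ^ p : Polynomial K) →ₗ[K] K,
      (∀ a b, φ a b = - φ b a) →
      (∀ a b c, φ (a * b) c + φ (b * c) a + φ (c * a) b = 0) →
      (∀ (D : Derivation K (AdjoinRoot (Polynomial.X ^ p : Polynomial K))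
            (AdjoinRoot (Polynomial.X ^ p : Polynomial K)))
         (a b : AdjoinRoot (Polynomial.X ^ p : Polynomial K)),
          φ (D a) b + φ a (D b) = 0) ∧
      ∃ c : K, φ = c • α := by
  have hp0 : 0 < p := hp.pos
  have h1p : 1 < p := hp.one_lt
  set r := AdjoinRoot.root (Polynomial.X ^ p : Polynomial K) with hrdef
  have hfne : (Polynomial.X ^ p : Polynomial K) ≠ 0 := pow_ne_zero _ Polynomial.X_ne_zero
  set pb := AdjoinRoot.powerBasis hfne with hpbdef
  have hdim : pb.dim = p := by
    simp [hpbdef, AdjoinRoot.powerBasis, Polynomial.natDegree_X_pow]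
  have hgen : pb.gen = r := by simp [hpbdef, AdjoinRoot.powerBasis, hrdef]
  have hbasis : ∀ i : Fin pb.dim, pb.basis i = r ^ (i : ℕ) := by
    intro i; rw [pb.coe_basis, hgen]
  have hrp : r ^ p = 0 := by
    rw [hrdef, ← AdjoinRoot.mk_X, ← map_pow, AdjoinRoot.mk_self]
  have hrm : ∀ m : ℕ, p ≤ m → r ^ m = 0 := by
    intro m hm
    calc r ^ m = r ^ p * r ^ (m - p) := by rw [← pow_add]; congr 1; omega
    _ = 0 := by rw [hrp, zero_mul]
  have hpK : (p : K) = 0 := CharP.cast_eq_zero K p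
  have hcast : ∀ m : ℕ, 0 < m → m < p → ((m : K) ≠ 0) := by
    intro m hm1 hm2 h
    have := (CharP.cast_eq_zero_iff K p m).1 h
    have := Nat.le_of_dvd hm1 this
    omega
  constructor
  · intro h0
    have := hα 1 (p - 1) h1p (by omega)
    rw [h0] at this
    simp only [LinearMap.zero_apply] at this
    rw [if_pos (by omega)] at this
    norm_num at this
  · intro φ hskew hcyc
    -- φ a 1 = 0
    have hone : ∀ a, φ a 1 = 0 := by
      intro a
      have := hcyc a 1 1
      rw [mul_one, one_mul, one_mul] at this
      have h2 := hskew 1 a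
      -- φ a 1 + φ 1 a + φ a 1 = 0, φ 1 a = - φ a 1
      have h3 := hskew a 1
      linear_combination this - h2 + (h3 - h3)
    -- recursion
    have hrec : ∀ m n : ℕ, φ (r ^ (m + 1)) (r ^ n)
        = φ (r ^ m) (r ^ (n + 1)) + φ r (r ^ (m + n)) := by
      intro m n
      have hc := hcyc (r ^ m) (r ^ n) r
      rw [← pow_add] at hc
      have e1 : r ^ n * r = r ^ (n + 1) := by rw [pow_succ]
      have e2 : r * r ^ m = r ^ (m + 1) := by rw [← pow_succ']
      rw [e1, e2] at hc
      have s1 := hskew (r ^ (m + n)) r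
      have s2 := hskew (r ^ (n + 1)) (r ^ m)
      linear_combination hc - s1 - s2
    set c := φ r (r ^ (p - 1)) with hcdef
    -- g(m+1, n) = (m+1) * e(m+n)
    have hg : ∀ m n : ℕ, φ (r ^ (m + 1)) (r ^ n)
        = ((m + 1 : ℕ) : K) * φ r (r ^ (m + n)) := by
      intro m
      induction m with
      | zero => intro n; simp [pow_one]
      | succ m ih =>
        intro n
        rw [hrec (m + 1) n, ih (n + 1)]
        have : m + (n + 1) = m + 1 + n := by omega
        rw [this]
        push_cast
        ring
    -- e(n) = 0 unless n = p - 1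
    have he : ∀ n : ℕ, n ≠ p - 1 → φ r (r ^ n) = 0 := by
      intro n hn
      by_cases hnp : p ≤ n
      · rw [hrm n hnp]; simp
      · have h1 : φ (r ^ (n + 1)) (r ^ 0) = ((n + 1 : ℕ) : K) * φ r (r ^ (n + 0)) := hg n 0
        rw [pow_zero, hone, add_zero] at h1
        have hne : ((n + 1 : ℕ) : K) ≠ 0 := hcast (n + 1) (by omega) (by omega)
        exact (mul_eq_zero.1 h1.symm).resolve_left hne
    -- key formula
    have key : ∀ m n : ℕ, φ (r ^ m) (r ^ n)
        = (if m + n = p then (m : K) else 0) * c := by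
      intro m n
      cases m with
      | zero =>
        rw [pow_zero, hskew, hone]
        simp
      | succ m =>
        rw [hg m n]
        by_cases h : m + 1 + n = p
        · have : m + n = p - 1 := by omega
          rw [this, ← hcdef, if_pos h]
        · rw [he (m + n) (by omega), if_neg h]
          ring
    refine ⟨?_, ⟨c, ?_⟩⟩
    · -- derivation invariance
      intro D a b
      -- ψ = 0
      set ψ : AdjoinRoot (Polynomial.X ^ p : Polynomial K) →ₗ[K]
          AdjoinRoot (Polynomial.X ^ p : Polynomial K) →ₗ[K] K :=
        (φ ∘ₗ D.toLinearMap) + (φ.flip ∘ₗ D.toLinearMap).flip with hψdef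
      have hψ : ∀ a b, ψ a b = φ (D a) b + φ a (D b) := by
        intro a b; simp [hψdef]
      have hD : ∀ m : ℕ, D (r ^ m) = m • (r ^ (m - 1) * D r) := by
        intro m
        rw [Derivation.leibniz_pow, smul_eq_mul]
      have hψ0 : ψ = 0 := by
        apply pb.basis.ext
        intro i
        apply pb.basis.ext
        intro j
        have hb1 : ∀ (n : ℕ) (u v : AdjoinRoot (Polynomial.X ^ p : Polynomial K)),
            φ (n • u) v = (n : K) * φ u v := by
          intro n u v
          rw [map_nsmul, LinearMap.smul_apply, nsmul_eq_mul]
        have hb2 : ∀ (n : ℕ) (u v : AdjoinRoot (Polynomial.X ^ p : Polynomial K)),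
            φ u (n • v) = (n : K) * φ u v := by
          intro n u v
          rw [map_nsmul, nsmul_eq_mul]
        rw [hbasis i, hbasis j, hψ, hD, hD, hb1, hb2]
        set i' := (i : ℕ) with hi'
        set j' := (j : ℕ) with hj'
        have hspan : ∀ u : AdjoinRoot (Polynomial.X ^ p : Polynomial K),
            (i' : K) * φ (r ^ (i' - 1) * u) (r ^ j')
              + (j' : K) * φ (r ^ i') (r ^ (j' - 1) * u) = 0 := by
          intro u
          have hu : u ∈ Submodule.span K (Set.range pb.basis) := by
            rw [pb.basis.span_eq]; trivial
          induction hu using Submodule.span_induction with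
          | mem x hx =>
            obtain ⟨k, rfl⟩ := hx
            rw [hbasis k, ← pow_add, ← pow_add, key, key]
            set k' := (k : ℕ) with hk'
            by_cases hi0 : i' = 0
            · rw [hi0]
              simp
            · by_cases hj0 : j' = 0
              · rw [hj0]
                by_cases hA : i' - 1 + k' + 0 = p
                · rw [if_pos hA]
                  have : ((i' - 1 + k' : ℕ) : K) = 0 := by
                    rw [show i' - 1 + k' = p by omega, hpK]
                  rw [this]
                  simp
                · rw [if_neg hA]
                  simp
              · by_cases hA : i' - 1 + k' + j' = p
                · have hB : i' + (j' - 1 + k') = p := by omega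
                  rw [if_pos hA, if_pos hB]
                  have hc1 : ((i' - 1 + k' : ℕ) : K) + ((j' : ℕ) : K) = 0 := by
                    rw [← Nat.cast_add, hA, hpK]
                  push_cast at hc1 ⊢
                  linear_combination (i' : K) * c * hc1
                · have hB : ¬ (i' + (j' - 1 + k') = p) := by omega
                  rw [if_neg hA, if_neg hB]
                  ring
          | zero => simp
          | add x y hx hy ihx ihy =>
            simp only [mul_add, map_add, LinearMap.add_apply]
            linear_combination ihx + ihy
          | smul t x hx ihx =>
            simp only [mul_smul_comm, map_smul, LinearMap.smul_apply,
              smul_eq_mul]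
            linear_combination t * ihx
        exact hspan (D r)
      have hfin := hψ a b
      rw [hψ0] at hfin
      simpa using hfin.symm
    · -- φ = c • α
      apply pb.basis.ext
      intro i
      apply pb.basis.ext
      intro j
      rw [hbasis i, hbasis j]
      have hi : (i : ℕ) < p := by have h := i.isLt; omega
      have hj : (j : ℕ) < p := by have h := j.isLt; omega
      rw [key]
      simp only [LinearMap.smul_apply, smul_eq_mul]
      rw [hα _ _ hi hj]
      ring
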